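/- The series ∑_{n=1}^∞ 3/(n² · C(2n,n)) converges to π²/6, where C(2n,n) is the central binomial coefficient. -/

import Mathlib

open Real MeasureTheory intervalIntegral Set
open scoped Interval

lemma beta_nat : ∀ (b a : ℕ), (∫ x in (0:ℝ)..1, x ^ a * (1 - x) ^ b)
    = (Nat.factorial a * Nat.factorial b : ℝ) / Nat.factorial (a + b + 1) := by
  intro b
  induction b with
  | zero =>
    intro a
    simp only [pow_zero, mul_one, integral_pow, one_pow, Nat.factorial_zero, Nat.cast_one]
    rw [Nat.factorial_succ]
    push_cast
    rw [zero_pow (by omega)]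
    field_simp
    norm_num
  | succ b IH =>
    intro a
    have hderiv : ∀ x ∈ Set.uIcc (0:ℝ) 1,
        HasDerivAt (fun y : ℝ => y ^ (a+1) * (1-y) ^ (b+1))
        (((a:ℝ)+1) * (x ^ a * (1-x)^(b+1)) - ((b:ℝ)+1) * (x^(a+1) * (1-x)^b)) x := by
      intro x _
      have h1 : HasDerivAt (fun y : ℝ => y ^ (a+1)) (((a:ℝ)+1) * x ^ a) x := by
        simpa using hasDerivAt_pow (a+1) x
      have h3 : HasDerivAt (fun y : ℝ => 1 - y) (-1) x := (hasDerivAt_id x).const_sub 1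
      have h2 := h3.fun_pow (b+1)
      have := h1.fun_mul h2
      convert this using 1
      · rfl
      · rfl
      push_cast
      ring
    have hc1 : Continuous fun x : ℝ => x ^ a * (1-x)^(b+1) := by fun_prop
    have hc2 : Continuous fun x : ℝ => x ^ (a+1) * (1-x)^b := by fun_prop
    have hint : IntervalIntegrable (fun x : ℝ =>
        ((a:ℝ)+1) * (x ^ a * (1-x)^(b+1)) - ((b:ℝ)+1) * (x^(a+1) * (1-x)^b)) volume 0 1 :=
      ((continuous_const.mul hc1).sub (continuous_const.mul hc2)).intervalIntegrable 0 1
    have key := integral_eq_sub_of_hasDerivAt hderiv hint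
    rw [integral_sub ((continuous_const.fun_mul hc1).intervalIntegrable 0 1)
        ((continuous_const.fun_mul hc2).intervalIntegrable 0 1), intervalIntegral.integral_const_mul, intervalIntegral.integral_const_mul] at key
    simp only [one_pow, sub_self, zero_pow (Nat.succ_ne_zero b), mul_zero, zero_pow
        (Nat.succ_ne_zero a), zero_mul, sub_zero] at key
    -- key : (a+1) * ∫ x^a (1-x)^(b+1) - (b+1) * ∫ x^(a+1) (1-x)^b = 0
    have IH' := IH (a+1)
    rw [IH'] at key
    have hidx : a + 1 + b + 1 = a + (b + 1) + 1 := by omega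
    rw [hidx] at key
    have ha : ((a:ℝ)+1) ≠ 0 := by positivity
    have hF : (Nat.factorial (a + (b+1) + 1) : ℝ) ≠ 0 := by positivity
    have e : (∫ x in (0:ℝ)..1, x ^ a * (1 - x) ^ (b+1))
        = ((b:ℝ)+1) * ((Nat.factorial (a+1) * Nat.factorial b : ℝ)
            / Nat.factorial (a + (b+1) + 1)) / ((a:ℝ)+1) := by
      field_simp at key ⊢
      linarith
    rw [e, Nat.factorial_succ (a), Nat.factorial_succ b]
    push_cast
    field_simp


lemma log_one_add_series {x : ℝ} (h0 : 0 ≤ x) (h1 : x < 1) :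
    HasSum (fun k : ℕ => (-1)^k * x^(k+1)/(k+1)) (Real.log (1+x)) := by
  have habs : |(-x)| < 1 := by rwa [abs_neg, abs_of_nonneg h0]
  have H := (Real.hasSum_pow_div_log_of_abs_lt_one habs).neg
  rw [sub_neg_eq_add, neg_neg] at H
  convert H using 2 with k
  · rfl
  rw [neg_pow, pow_succ]
  ring

lemma alt_zeta : HasSum (fun k : ℕ => (-1)^k / ((k:ℝ)+1)^2) (π^2/12) := by
  have h : HasSum (fun n : ℕ => 1/(n:ℝ)^2) (π^2/6) := hasSum_zeta_two
  have h' : HasSum (fun k : ℕ => 1/((k:ℝ)+1)^2) (π^2/6) := by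
    have := (hasSum_nat_add_iff' 1).mpr h
    simpa using this
  have he : HasSum (fun k : ℕ => 1/(2*(k:ℝ)+2)^2) (π^2/24) := by
    have H := h'.mul_left (1/4)
    have e1 : (fun k : ℕ => 1/(2*(k:ℝ)+2)^2) = fun k : ℕ => 1/4 * (1/((k:ℝ)+1)^2) := by
      funext k; field_simp; ring
    rw [e1, show π^2/24 = 1/4*(π^2/6) by ring]
    exact H
  set f : ℕ → ℝ := fun m => if Odd m then 1/((m:ℝ)+1)^2 else 0 with hf
  have hinj : Function.Injective (fun k : ℕ => 2*k+1) := fun a b hab => by simp only [] at hab; omega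
  have hrange : ∀ m ∉ Set.range (fun k : ℕ => 2*k+1), f m = 0 := by
    intro m hm
    simp only [hf]
    rw [if_neg]
    rintro ⟨j, hj⟩
    refine hm ⟨j, ?_⟩
    simp only []
    omega
  have ho : HasSum f (π^2/24) := by
    rw [← hinj.hasSum_iff hrange]
    convert he using 2 with k
    have : Odd (2*k+1) := ⟨k, by omega⟩
    simp only [hf, Function.comp_apply, if_pos this]
    push_cast
    ring_nf
  have hs := h'.sub (ho.mul_left 2)
  have : π^2/6 - 2*(π^2/24) = π^2/12 := by ring
  rw [this] at hs
  convert hs using 2 with k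
  · rfl
  rcases Nat.even_or_odd k with hk | hk
  · simp [hf, hk.neg_one_pow, Nat.not_odd_iff_even.mpr hk]
  · rw [hk.neg_one_pow]
    simp only [hf, if_pos hk]
    ring

open Real MeasureTheory intervalIntegral Set
open scoped Interval

noncomputable def gg : ℝ → ℝ := fun t => 3 * (Real.log (1+t) - Real.log (1+t^3)) / t

lemma ae_mem_Ioo : ∀ᵐ t : ℝ, t ∈ Ι (0:ℝ) 1 → t ∈ Ioo (0:ℝ) 1 := by
  have h1 : ∀ᵐ t : ℝ, t ≠ (1:ℝ) := by
    rw [ae_iff]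
    simp
  filter_upwards [h1] with t ht hmem
  rw [uIoc_of_le zero_le_one] at hmem
  exact ⟨hmem.1, lt_of_le_of_ne hmem.2 ht⟩

lemma hasSumA : HasSum
    (fun n : ℕ => ∫ t in (0:ℝ)..1, 3/((n:ℝ)+1) * (t^n * (1-t)^(n+1)))
    (∫ t in (0:ℝ)..1, gg t) := by
  apply intervalIntegral.hasSum_integral_of_dominated_convergence
    (bound := fun n _ => 3 * (1/4:ℝ)^n)
  · intro n
    exact (by fun_prop : Continuous fun t : ℝ => 3/((n:ℝ)+1) * (t^n * (1-t)^(n+1))).aestronglyMeasurable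
  · intro n
    filter_upwards [ae_mem_Ioo] with t ht hmem
    obtain ⟨ht0, ht1⟩ := ht hmem
    have h1 : (0:ℝ) ≤ t := ht0.le
    have h2 : (0:ℝ) ≤ 1 - t := by linarith
    rw [Real.norm_eq_abs, abs_of_nonneg (by positivity)]
    have e1 : t^n * (1-t)^(n+1) = (t*(1-t))^n * (1-t) := by rw [mul_pow]; ring
    have e2 : (t*(1-t))^n ≤ (1/4:ℝ)^n := by
      apply pow_le_pow_left₀ (by positivity)
      nlinarith [sq_nonneg (t - 1/2)]
    have e3 : 3/((n:ℝ)+1) ≤ 3 := by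
      rw [div_le_iff₀ (by positivity)]
      nlinarith [Nat.cast_nonneg (α := ℝ) n]
    calc 3/((n:ℝ)+1) * (t^n * (1-t)^(n+1)) ≤ 3 * (t^n * (1-t)^(n+1)) := by
          apply mul_le_mul_of_nonneg_right e3 (by positivity)
      _ = 3 * ((t*(1-t))^n * (1-t)) := by rw [e1]
      _ ≤ 3 * ((1/4:ℝ)^n * 1) := by
          apply mul_le_mul_of_nonneg_left _ (by norm_num)
          apply mul_le_mul e2 (by linarith) h2 (by positivity)
      _ = 3 * (1/4:ℝ)^n := by ring
  · filter_upwards with t _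
    exact (summable_geometric_of_lt_one (by norm_num) (by norm_num)).mul_left 3
  · exact intervalIntegrable_const
  · filter_upwards [ae_mem_Ioo] with t ht hmem
    obtain ⟨ht0, ht1⟩ := ht hmem
    have hy : |t*(1-t)| < 1 := by
      rw [abs_of_nonneg (by nlinarith)]
      nlinarith
    have H := (Real.hasSum_pow_div_log_of_abs_lt_one hy).mul_left (3/t)
    have hgt : gg t = 3/t * -Real.log (1 - t*(1-t)) := by
      have hfac : (1:ℝ) + t^3 = (1+t) * (1 - t*(1-t)) := by ring
      have hp1 : (0:ℝ) < 1 + t := by linarith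
      have hp2 : (0:ℝ) < 1 - t*(1-t) := by nlinarith
      rw [gg, hfac, Real.log_mul hp1.ne' hp2.ne']
      ring
    rw [hgt]
    convert H using 2 with n
    · rfl
    rw [mul_pow]
    field_simp
    ring

lemma hasSumB : HasSum
    (fun k : ℕ => ∫ t in (0:ℝ)..1, (3*(-1:ℝ)^k/((k:ℝ)+1)) * (t^k - t^(3*k+2)))
    (∫ t in (0:ℝ)..1, gg t) := by
  apply intervalIntegral.hasSum_integral_of_dominated_convergence
    (bound := fun k t => 6 * (1-t) * t^k)
  · intro k
    exact (by fun_prop : Continuous fun t : ℝ =>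
      (3*(-1:ℝ)^k/((k:ℝ)+1)) * (t^k - t^(3*k+2))).aestronglyMeasurable
  · intro k
    filter_upwards [ae_mem_Ioo] with t ht hmem
    obtain ⟨ht0, ht1⟩ := ht hmem
    have h1 : (0:ℝ) ≤ t := ht0.le
    have h2 : (0:ℝ) ≤ 1 - t := by linarith
    have hmono : t^(3*k+2) ≤ t^k := pow_le_pow_of_le_one h1 ht1.le (by omega)
    have hBern : 1 - t^(2*k+2) ≤ (2*(k:ℝ)+2) * (1-t) := by
      have := one_add_mul_le_pow (a := t - 1) (by linarith) (2*k+2)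
      have h3 : (1 + (t-1))^(2*k+2) = t^(2*k+2) := by ring_nf
      push_cast at this
      nlinarith [this]
    have habs : |(3*(-1:ℝ)^k/((k:ℝ)+1)) * (t^k - t^(3*k+2))|
        = 3/((k:ℝ)+1) * (t^k - t^(3*k+2)) := by
      rw [abs_mul, abs_div, abs_mul, abs_pow, abs_neg, abs_one, one_pow, mul_one,
        abs_of_nonneg (by linarith : (0:ℝ) ≤ 3), abs_of_nonneg (by positivity : (0:ℝ) ≤ (k:ℝ)+1),
        abs_of_nonneg (by linarith : (0:ℝ) ≤ t^k - t^(3*k+2))]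
    rw [Real.norm_eq_abs, habs]
    have key : t^k - t^(3*k+2) ≤ (2*(k:ℝ)+2) * ((1-t) * t^k) := by
      have e : t^(3*k+2) = t^k * t^(2*k+2) := by rw [← pow_add]; congr 1; omega
      rw [e]
      calc t^k - t^k * t^(2*k+2) = t^k * (1 - t^(2*k+2)) := by ring
        _ ≤ t^k * ((2*(k:ℝ)+2) * (1-t)) := by
            apply mul_le_mul_of_nonneg_left hBern (by positivity)
        _ = (2*(k:ℝ)+2) * ((1-t) * t^k) := by ring
    calc 3/((k:ℝ)+1) * (t^k - t^(3*k+2))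
        ≤ 3/((k:ℝ)+1) * ((2*(k:ℝ)+2) * ((1-t) * t^k)) := by
          apply mul_le_mul_of_nonneg_left key (by positivity)
      _ = 6 * (1-t) * t^k := by
          field_simp
          ring
  · filter_upwards [ae_mem_Ioo] with t ht hmem
    obtain ⟨ht0, ht1⟩ := ht hmem
    exact ((summable_geometric_of_lt_one ht0.le ht1).mul_left _)
  · rw [intervalIntegrable_iff]
    apply (integrableOn_const measure_Ioc_lt_top.ne).congr_fun_ae (f := fun _ => (6:ℝ))
    have : ∀ᵐ t : ℝ ∂(volume.restrict (Ι (0:ℝ) 1)), t ∈ Ioo (0:ℝ) 1 := by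
      have h2 := (ae_restrict_iff' measurableSet_uIoc).mpr (ae_mem_Ioo)
      filter_upwards [h2, MeasureTheory.ae_restrict_mem measurableSet_uIoc] with t h3 h4
      exact h3
    filter_upwards [this] with t ht
    obtain ⟨ht0, ht1⟩ := ht
    have hne : (1:ℝ) - t ≠ 0 := by linarith
    have H := (hasSum_geometric_of_lt_one ht0.le ht1).mul_left (6 * (1-t))
    rw [H.tsum_eq, mul_inv_cancel_right₀ hne 6]  -- may fail; fix below
  · filter_upwards [ae_mem_Ioo] with t ht hmem
    obtain ⟨ht0, ht1⟩ := ht hmem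
    have hcube0 : (0:ℝ) ≤ t^3 := by positivity
    have hcube1 : t^3 < 1 := pow_lt_one₀ ht0.le ht1 (by norm_num)
    have H := ((log_one_add_series ht0.le ht1).sub
      (log_one_add_series hcube0 hcube1)).mul_left (3/t)
    have hgt : gg t = 3/t * (Real.log (1+t) - Real.log (1+t^3)) := by
      rw [gg]; ring
    rw [hgt]
    convert H using 2 with k
    · rfl
    rw [← pow_mul]
    field_simp
    ring

lemma intF (n : ℕ) : (∫ t in (0:ℝ)..1, 3/((n:ℝ)+1) * (t^n * (1-t)^(n+1)))
    = (3:ℝ) / (((n:ℝ) + 1) ^ 2 * Nat.choose (2 * (n + 1)) (n + 1)) := by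
  rw [intervalIntegral.integral_const_mul, beta_nat (n+1) n]
  have hidx : n + (n+1) + 1 = 2 * (n+1) := by omega
  rw [hidx]
  have hC := Nat.choose_mul_factorial_mul_factorial (show (n+1) ≤ 2*(n+1) by omega)
  have hsub : 2*(n+1) - (n+1) = n+1 := by omega
  rw [hsub] at hC
  have hCR : ((2*(n+1)).factorial : ℝ)
      = (Nat.choose (2*(n+1)) (n+1) : ℝ) * (n+1).factorial * (n+1).factorial := by
    exact_mod_cast congrArg (Nat.cast (R := ℝ)) hC.symm
  rw [hCR]
  have h1 : ((n+1).factorial : ℝ) = ((n:ℝ)+1) * (n.factorial : ℝ) := by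
    rw [Nat.factorial_succ]; push_cast; ring
  have hCpos : (0:ℝ) < (Nat.choose (2*(n+1)) (n+1) : ℝ) := by
    exact_mod_cast Nat.choose_pos (show (n+1) ≤ 2*(n+1) by omega)
  have hfpos : (0:ℝ) < (n.factorial : ℝ) := by exact_mod_cast n.factorial_pos
  rw [h1]
  field_simp

lemma intG (k : ℕ) : (∫ t in (0:ℝ)..1, (3*(-1:ℝ)^k/((k:ℝ)+1)) * (t^k - t^(3*k+2)))
    = 2 * (-1:ℝ)^k / ((k:ℝ)+1)^2 := by
  rw [intervalIntegral.integral_const_mul, integral_sub ((continuous_pow k).intervalIntegrable 0 1)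
    ((continuous_pow (3*k+2)).intervalIntegrable 0 1), integral_pow, integral_pow]
  have h1 : ((k:ℝ)+1) ≠ 0 := by positivity
  have h2 : (3*(k:ℝ)+2+1) ≠ 0 := by positivity
  push_cast
  rw [one_pow, zero_pow (by omega : k+1 ≠ 0), zero_pow (by omega : 3*k+2+1 ≠ 0)]
  field_simp
  ring

theorem stmt0 :
    HasSum (fun n : ℕ => (3 : ℝ) / ((n + 1) ^ 2 * Nat.choose (2 * (n + 1)) (n + 1)))
      (π ^ 2 / 6) := by
  have A := hasSumA
  have B := hasSumB
  simp only [intF] at A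
  simp only [intG] at B
  have T2 : HasSum (fun k : ℕ => 2 * (-1:ℝ)^k / ((k:ℝ)+1)^2) (π^2/6) := by
    have := alt_zeta.mul_left 2
    have e : (fun k : ℕ => 2 * ((-1:ℝ)^k / ((k:ℝ)+1)^2))
        = fun k : ℕ => 2 * (-1:ℝ)^k / ((k:ℝ)+1)^2 := by
      funext k; ring
    rw [e, show (2:ℝ) * (π^2/12) = π^2/6 by ring] at this
    exact this
  have hI : (∫ t in (0:ℝ)..1, gg t) = π^2/6 := B.unique T2
  rw [hI] at A
  exact A
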